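/- arXiv:2105.10519 — 2 statements merged into one kernel-verified Lean document; each statement's English description precedes it below -/
import Mathlib

section
/- For every ν > 0 and every t ≥ 0 one has |∫_{−√ν}^{√ν} e^{i t s} (1 − s²/ν)^{ν − 1/2} ds| ≤ 2100 · (e^{−t} + e^{−ν/5}). -/
noncomputable section
open MeasureTheory Real Filter Metric
open scoped ENNReal NNReal FourierTransform SchwartzMap

namespace BesselAux

lemma exp_nat_le (n : ℕ) : Real.exp n ≤ 2.7182818286 ^ n := by
  calc Real.exp (n:ℝ) = Real.exp 1 ^ (n:ℕ) := by
        rw [← Real.exp_nat_mul]; norm_num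
    _ ≤ 2.7182818286 ^ n := pow_le_pow_left₀ (Real.exp_pos 1).le Real.exp_one_lt_d9.le n

lemma n_exp65 : Real.exp 6.5 ≤ 732 := by
  have h7 : Real.exp 7 ≤ 1096.64 := by
    have := exp_nat_le 7; norm_num at this ⊢; linarith
  have h05 : (1.5:ℝ) ≤ Real.exp 0.5 := by
    have := Real.add_one_le_exp (0.5:ℝ); linarith
  have key : Real.exp 6.5 * Real.exp 0.5 = Real.exp 7 := by
    rw [← Real.exp_add]; norm_num
  nlinarith [Real.exp_pos 6.5, Real.exp_pos 0.5]

lemma n_exp66 : Real.exp 6.6 ≤ 784 := by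
  have h7 : Real.exp 7 ≤ 1096.64 := by
    have := exp_nat_le 7; norm_num at this ⊢; linarith
  have h05 : (1.4:ℝ) ≤ Real.exp 0.4 := by
    have := Real.add_one_le_exp (0.4:ℝ); linarith
  have key : Real.exp 6.6 * Real.exp 0.4 = Real.exp 7 := by
    rw [← Real.exp_add]; norm_num
  nlinarith [Real.exp_pos 6.6, Real.exp_pos 0.4]

lemma n_exp25 : Real.exp 2.5 ≤ 13.4 := by
  have h3 : Real.exp 3 ≤ 20.1 := by
    have := exp_nat_le 3; norm_num at this ⊢; linarith
  have h05 : (1.5:ℝ) ≤ Real.exp 0.5 := by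
    have := Real.add_one_le_exp (0.5:ℝ); linarith
  have key : Real.exp 2.5 * Real.exp 0.5 = Real.exp 3 := by
    rw [← Real.exp_add]; norm_num
  nlinarith [Real.exp_pos 2.5, Real.exp_pos 0.5]

lemma n_sqrt2pi : Real.sqrt (2 * π) ≤ 2.6 := by
  rw [show (2.6:ℝ) = Real.sqrt (2.6^2) by rw [Real.sqrt_sq]; norm_num]
  apply Real.sqrt_le_sqrt
  nlinarith [Real.pi_lt_d2]

lemma n_sqrt4pi : Real.sqrt (4 * π) ≤ 3.545 := by
  rw [show (3.545:ℝ) = Real.sqrt (3.545^2) by rw [Real.sqrt_sq]; norm_num]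
  apply Real.sqrt_le_sqrt
  nlinarith [Real.pi_lt_d6]

lemma n_log4 : (1.386:ℝ) ≤ Real.log 4 := by
  have : Real.log 4 = 2 * Real.log 2 := by
    rw [show (4:ℝ) = 2^(2:ℕ) by norm_num, Real.log_pow]; norm_num
  rw [this]; linarith [Real.log_two_gt_d9]

/-- rewrite `a ^ e` as `(a^2) ^ (e/2)` for `a ≥ 0`. -/
lemma rpow_eq_sq_rpow_half (a e : ℝ) (ha : 0 ≤ a) : a ^ e = (a ^ 2) ^ (e / 2) := by
  rw [← Real.rpow_natCast a 2, ← Real.rpow_mul ha]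
  congr 1
  ring

/-- the key arithmetic estimate on the top side of the rectangle -/
lemma top_arith (ν x : ℝ) (hν : 1 ≤ ν) (hx : x ^ 2 ≤ ν) :
    ((1 - (x ^ 2 - 1) / ν) ^ 2 + (2 * x / ν) ^ 2) ^ ((ν - 1 / 2) / 2)
      ≤ Real.exp 2.5 * Real.exp (-(1/4) * x ^ 2) := by
  have hν0 : (0:ℝ) < ν := by linarith
  set B : ℝ := (1 - (x ^ 2 - 1) / ν) ^ 2 + (2 * x / ν) ^ 2 with hB
  have hB0 : 0 ≤ B := by positivity
  have h1 : B ≤ Real.exp (B - 1) := by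
    have := Real.add_one_le_exp (B - 1); linarith
  have h2 : B ^ ((ν - 1 / 2) / 2) ≤ Real.exp (B - 1) ^ ((ν - 1 / 2) / 2) :=
    Real.rpow_le_rpow hB0 h1 (by linarith)
  have h3 : Real.exp (B - 1) ^ ((ν - 1 / 2) / 2) = Real.exp ((B - 1) * ((ν - 1 / 2) / 2)) :=
    (Real.exp_mul _ _).symm
  have h4 : (B - 1) * ((ν - 1 / 2) / 2) ≤ 2.5 - x ^ 2 / 4 := by
    have hB1 : B - 1 = ((ν + 1 - x ^ 2) ^ 2 + 4 * x ^ 2 - ν ^ 2) / ν ^ 2 := by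
      rw [hB]; field_simp; ring
    rw [hB1, div_mul_eq_mul_div, div_le_iff₀ (by positivity : (0:ℝ) < ν ^ 2)]
    nlinarith [sq_nonneg x, sq_nonneg (x ^ 2), mul_nonneg (sub_nonneg.2 hx) (sq_nonneg x),
      mul_nonneg (sub_nonneg.2 hx) (sub_nonneg.2 hν), sq_nonneg (ν - x ^ 2),
      mul_nonneg (mul_nonneg (sub_nonneg.2 hx) (sq_nonneg x)) hν0.le]
  calc B ^ ((ν - 1 / 2) / 2) ≤ Real.exp ((B - 1) * ((ν - 1 / 2) / 2)) := h3 ▸ h2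
    _ ≤ Real.exp (2.5 - x ^ 2 / 4) := Real.exp_le_exp.2 h4
    _ = Real.exp 2.5 * Real.exp (-(1/4) * x ^ 2) := by
        rw [← Real.exp_add]; ring_nf

/-- the side estimate -/
lemma side_arith (ν B : ℝ) (hν : 33 ≤ ν) (hB0 : 0 ≤ B) (hB : B ≤ 5 / ν) :
    B ^ ((ν - 1 / 2) / 2) ≤ Real.exp (-ν / 5) := by
  have hν0 : (0:ℝ) < ν := by linarith
  have h5 : (0:ℝ) < 5 / ν := by positivity
  calc B ^ ((ν - 1 / 2) / 2) ≤ (5 / ν) ^ ((ν - 1 / 2) / 2) :=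
        Real.rpow_le_rpow hB0 hB (by linarith)
    _ ≤ Real.exp (-ν / 5) := by
        rw [Real.rpow_def_of_pos h5]
        apply Real.exp_le_exp.2
        have hlog : Real.log (5 / ν) = -Real.log (ν / 5) := by
          rw [← Real.log_inv]; congr 1; field_simp
        have h4 : (1.386:ℝ) ≤ Real.log (ν / 5) := by
          refine le_trans n_log4 (Real.log_le_log (by norm_num) (by linarith))
        rw [hlog]
        nlinarith [mul_nonneg (sub_nonneg.2 h4) (by linarith : (0:ℝ) ≤ (ν - 1/2) / 2)]


lemma norm_F (ν t : ℝ) (z : ℂ) :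
    ‖Complex.exp (Complex.I * t * z) * (1 - z ^ 2 / (ν:ℂ)) ^ ((ν:ℂ) - 1/2)‖
      = Real.exp (-(t * z.im)) * ‖1 - z ^ 2 / (ν:ℂ)‖ ^ (ν - 1/2) := by
  rw [norm_mul, Complex.norm_exp]
  congr 1
  · congr 1
    simp [Complex.mul_re, Complex.mul_im]
  · rw [show ((ν:ℂ) - 1/2) = (((ν - 1/2 : ℝ)) : ℂ) by push_cast; ring,
      Complex.norm_cpow_real]

lemma sq_abs_base (ν : ℝ) (z : ℂ) :
    ‖1 - z ^ 2 / (ν:ℂ)‖ ^ (2:ℕ)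
      = (1 - (z.re ^ 2 - z.im ^ 2) / ν) ^ 2 + (2 * z.re * z.im / ν) ^ 2 := by
  rw [Complex.sq_norm, Complex.normSq_apply]
  simp [pow_two, Complex.mul_re, Complex.mul_im]
  ring

lemma base_re (ν : ℝ) (z : ℂ) :
    (1 - z ^ 2 / (ν:ℂ)).re = 1 - (z.re ^ 2 - z.im ^ 2) / ν := by
  simp [pow_two, Complex.mul_re]

lemma base_im (ν : ℝ) (z : ℂ) :
    (1 - z ^ 2 / (ν:ℂ)).im = -(2 * z.re * z.im) / ν := by
  simp [pow_two, Complex.mul_im]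
  ring

/-- membership in slit plane when `im > 0` -/
lemma base_slit_of_im_pos (ν : ℝ) (hν : 0 < ν) (z : ℂ) (hz : 0 < z.im) :
    1 - z ^ 2 / (ν:ℂ) ∈ Complex.slitPlane := by
  rw [Complex.mem_slitPlane_iff, base_re, base_im]
  rcases eq_or_ne z.re 0 with h | h
  · left
    have h2 : (z.re ^ 2 - z.im ^ 2) / ν ≤ 0 :=
      div_nonpos_of_nonpos_of_nonneg (by nlinarith [sq_nonneg z.im]) hν.le
    linarith
  · right
    exact div_ne_zero (neg_ne_zero.2 (mul_ne_zero (mul_ne_zero two_ne_zero h) hz.ne')) hν.ne'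

lemma base_slit_of_lt (ν : ℝ) (hν : 0 < ν) (z : ℂ) (hz : z.re ^ 2 < ν) (hz0 : z.im = 0) :
    1 - z ^ 2 / (ν:ℂ) ∈ Complex.slitPlane := by
  rw [Complex.mem_slitPlane_iff, base_re]
  left
  have h2 : (z.re ^ 2 - z.im ^ 2) / ν < 1 := (div_lt_one hν).2 (by rw [hz0]; nlinarith)
  linarith


set_option maxHeartbeats 2000000 in
lemma hard_case (ν t : ℝ) (hν : 33 ≤ ν) (ht : 0 ≤ t) :
    ‖∫ s in (-Real.sqrt ν)..(Real.sqrt ν),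
        Complex.exp (Complex.I * t * s) * (((1 - s ^ 2 / ν) ^ (ν - 1/2) : ℝ) : ℂ)‖
      ≤ 50 * Real.exp (-t) + 2 * Real.exp (-ν / 5) := by
  have hν0 : (0:ℝ) < ν := by linarith
  set r := Real.sqrt ν with hr
  have hr0 : 0 < r := Real.sqrt_pos.2 hν0
  have hrr : r ^ 2 = ν := Real.sq_sqrt hν0.le
  set w : ℂ := (ν:ℂ) - 1/2 with hw
  have hwre : w.re = ν - 1/2 := by simp [hw]
  have hwpos : 0 < w.re := by rw [hwre]; linarith
  set F : ℂ → ℂ := fun z => Complex.exp (Complex.I * t * z) * (1 - z ^ 2 / (ν:ℂ)) ^ w with hF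
  -- continuity on the closed rectangle
  have hcont : ContinuousOn F (Set.uIcc (-r) r ×ℂ Set.uIcc 0 1) := by
    intro z hz
    apply ContinuousAt.continuousWithinAt
    apply ContinuousAt.mul (by fun_prop)
    have hb : ContinuousAt (fun z : ℂ => 1 - z ^ 2 / (ν:ℂ)) z := by fun_prop
    by_cases hmem : (1 - z ^ 2 / (ν:ℂ)) ∈ Complex.slitPlane
    · exact hb.cpow continuousAt_const hmem
    · rw [Complex.mem_reProdIm] at hz
      have hzre : z.re ∈ Set.Icc (-r) r := by
        have := hz.1; rwa [Set.uIcc_of_le (by linarith)] at this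
      have hzim : z.im ∈ Set.Icc (0:ℝ) 1 := by
        have := hz.2; rwa [Set.uIcc_of_le (by norm_num)] at this
      have him0 : z.im = 0 := by
        by_contra h
        exact hmem (base_slit_of_im_pos ν hν0 z (lt_of_le_of_ne hzim.1 (Ne.symm h)))
      have hsq : z.re ^ 2 = ν := by
        rcases lt_or_ge (z.re ^ 2) ν with h | h
        · exact absurd (base_slit_of_lt ν hν0 z h him0) hmem
        · nlinarith [hzre.1, hzre.2]
      have h0 : (1 - z ^ 2 / (ν:ℂ)) = 0 := by
        rw [Complex.ext_iff, base_re, base_im, him0, hsq]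
        constructor
        · simp only [Complex.zero_re]
          field_simp; ring
        · simp
      have hq : ContinuousAt (fun p : ℂ × ℂ => p.1 ^ p.2) (1 - z ^ 2 / (ν:ℂ), w) := by
        rw [h0]; exact Complex.continuousAt_cpow_zero_of_re_pos hwpos
      have hp : ContinuousAt (fun z : ℂ => ((1 - z ^ 2 / (ν:ℂ), w) : ℂ × ℂ)) z :=
        hb.prodMk continuousAt_const
      exact ContinuousAt.comp (x := z) (f := fun z : ℂ => ((1 - z ^ 2 / (ν:ℂ), w) : ℂ × ℂ))
        (g := fun p : ℂ × ℂ => p.1 ^ p.2) hq hp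
  -- differentiability on the open rectangle
  have hdiff : ∀ z ∈ (Set.Ioo (-r) r ×ℂ Set.Ioo (0:ℝ) 1) \ (∅ : Set ℂ),
      DifferentiableAt ℂ F z := by
    intro z hz
    rw [Set.diff_empty, Complex.mem_reProdIm] at hz
    have hslit := base_slit_of_im_pos ν hν0 z hz.2.1
    apply DifferentiableAt.mul (by fun_prop)
    exact DifferentiableAt.cpow (by fun_prop) (differentiableAt_const w) hslit
  -- the rectangle contour
  set z₀ : ℂ := ((-r : ℝ) : ℂ) with hz₀
  set w₀ : ℂ := ((r : ℝ) : ℂ) + Complex.I with hw₀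
  have hz₀re : z₀.re = -r := by simp [hz₀]
  have hz₀im : z₀.im = 0 := by simp [hz₀]
  have hw₀re : w₀.re = r := by simp [hw₀]
  have hw₀im : w₀.im = 1 := by simp [hw₀]
  have key := Complex.integral_boundary_rect_eq_zero_of_differentiable_on_off_countable
      F z₀ w₀ ∅ Set.countable_empty ?_ ?_
  rotate_left
  · rw [hz₀re, hz₀im, hw₀re, hw₀im]
    exact hcont
  · rw [hz₀re, hz₀im, hw₀re, hw₀im,
      min_eq_left (by linarith : -r ≤ r), max_eq_right (by linarith : -r ≤ r),
      min_eq_left (by norm_num : (0:ℝ) ≤ 1), max_eq_right (by norm_num : (0:ℝ) ≤ 1)]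
    exact hdiff
  rw [hz₀re, hz₀im, hw₀re, hw₀im] at key
  have hFz : ∀ z : ℂ, F z = Complex.exp (Complex.I * t * z) * (1 - z ^ 2 / (ν:ℂ)) ^ w :=
    fun z => by rw [hF]
  -- side estimates
  have hside : ∀ c : ℝ, c ^ 2 = ν →
      ‖∫ y in (0:ℝ)..1, F (↑c + ↑y * Complex.I)‖ ≤ Real.exp (-ν / 5) := by
    intro c hc
    have hb : ∀ y ∈ Set.uIoc (0:ℝ) 1, ‖F (↑c + ↑y * Complex.I)‖ ≤ Real.exp (-ν / 5) := by
      intro y hy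
      rw [Set.uIoc_of_le (by norm_num)] at hy
      set z : ℂ := ↑c + ↑y * Complex.I with hz
      have hzre : z.re = c := by simp [hz]
      have hzim : z.im = y := by simp [hz]
      have hy2 : y ^ 2 ≤ 1 := by nlinarith [hy.1, hy.2]
      have habs2 : ‖1 - z ^ 2 / (ν:ℂ)‖ ^ 2 ≤ 5 / ν := by
        rw [sq_abs_base, hzre, hzim]
        have h1 : 1 - (c ^ 2 - y ^ 2) / ν = y ^ 2 / ν := by
          rw [hc]; field_simp; ring
        rw [h1, show (y ^ 2 / ν) ^ 2 + (2 * c * y / ν) ^ 2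
            = (y ^ 2 * y ^ 2 + 4 * c ^ 2 * y ^ 2) / ν ^ 2 by field_simp; ring,
          div_le_div_iff₀ (by positivity) hν0]
        rw [hc]
        have hy4 : y ^ 2 * y ^ 2 ≤ 1 := by nlinarith
        nlinarith [hy4, hy2, hν0, sq_nonneg ν, mul_pos hν0 hν0]
      have hbound := side_arith ν (‖1 - z ^ 2 / (ν:ℂ)‖ ^ 2) hν
        (by positivity) habs2
      rw [hFz, hw, norm_F ν t z, hzim]
      calc Real.exp (-(t * y)) * ‖1 - z ^ 2 / (ν:ℂ)‖ ^ (ν - 1/2)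
          ≤ 1 * Real.exp (-ν / 5) := by
            apply mul_le_mul
            · have h2 : Real.exp (-(t * y)) ≤ Real.exp 0 :=
                Real.exp_le_exp.2 (by nlinarith [hy.1])
              simpa using h2
            · rw [rpow_eq_sq_rpow_half _ _ (norm_nonneg _)]
              exact_mod_cast hbound
            · positivity
            · norm_num
        _ = Real.exp (-ν / 5) := one_mul _
    calc ‖∫ y in (0:ℝ)..1, F (↑c + ↑y * Complex.I)‖
        ≤ Real.exp (-ν / 5) * |1 - 0| :=
          intervalIntegral.norm_integral_le_of_norm_le_const fun y hy => hb y hy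
      _ = Real.exp (-ν / 5) := by norm_num
  -- top estimate
  have htop : ‖∫ x in (-r)..r, F (↑x + ↑(1:ℝ) * Complex.I)‖ ≤ 50 * Real.exp (-t) := by
    have hb : ∀ x ∈ Set.uIoc (-r) r, ‖F (↑x + ↑(1:ℝ) * Complex.I)‖
        ≤ Real.exp (-t) * (Real.exp 2.5 * Real.exp (-(1/4) * x ^ 2)) := by
      intro x hx
      rw [Set.uIoc_of_le (by linarith)] at hx
      have hx2 : x ^ 2 ≤ ν := by nlinarith [hx.1, hx.2]
      set z : ℂ := ↑x + ↑(1:ℝ) * Complex.I with hz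
      have hzre : z.re = x := by simp [hz]
      have hzim : z.im = 1 := by simp [hz]
      have heq : ‖1 - z ^ 2 / (ν:ℂ)‖ ^ 2
          = (1 - (x ^ 2 - 1) / ν) ^ 2 + (2 * x / ν) ^ 2 := by
        rw [sq_abs_base, hzre, hzim]
        ring_nf
      rw [hFz, hw, norm_F ν t z, hzim, mul_one]
      apply mul_le_mul_of_nonneg_left _ (Real.exp_pos (-t)).le
      rw [rpow_eq_sq_rpow_half _ _ (norm_nonneg _)]
      calc ((‖1 - z ^ 2 / (ν:ℂ)‖) ^ 2 : ℝ) ^ ((ν - 1/2) / 2)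
          = ((1 - (x ^ 2 - 1) / ν) ^ 2 + (2 * x / ν) ^ 2) ^ ((ν - 1/2) / 2) := by
            rw [heq]
        _ ≤ Real.exp 2.5 * Real.exp (-(1/4) * x ^ 2) :=
            top_arith ν x (by linarith) hx2
    have hint : IntervalIntegrable
        (fun x : ℝ => Real.exp (-t) * (Real.exp 2.5 * Real.exp (-(1/4) * x ^ 2)))
        volume (-r) r := (Continuous.intervalIntegrable (by fun_prop) _ _)
    have h1 := intervalIntegral.norm_integral_le_abs_of_norm_le
      ((ae_restrict_mem measurableSet_uIoc).mono hb) hint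
    refine h1.trans ?_
    have h2 : (∫ x in (-r)..r, Real.exp (-t) * (Real.exp 2.5 * Real.exp (-(1/4) * x ^ 2)))
        = (Real.exp (-t) * Real.exp 2.5) * ∫ x in (-r)..r, Real.exp (-(1/4) * x ^ 2) := by
      simp_rw [← mul_assoc]
      rw [← intervalIntegral.integral_const_mul]
    have hInt : Integrable (fun x : ℝ => Real.exp (-(1/4) * x ^ 2)) :=
      integrable_exp_neg_mul_sq (by norm_num : (0:ℝ) < 1/4)
    have h3 : (∫ x in (-r)..r, Real.exp (-(1/4) * x ^ 2)) ≤ 3.545 := by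
      rw [intervalIntegral.integral_of_le (by linarith : -r ≤ r)]
      calc (∫ x in Set.Ioc (-r) r, Real.exp (-(1/4) * x ^ 2))
          ≤ ∫ x : ℝ, Real.exp (-(1/4) * x ^ 2) :=
            setIntegral_le_integral hInt
              (Filter.Eventually.of_forall fun x => (Real.exp_pos _).le)
        _ = Real.sqrt (π / (1/4)) := integral_gaussian (1/4)
        _ = Real.sqrt (4 * π) := by norm_num [div_eq_mul_inv, mul_comm]
        _ ≤ 3.545 := n_sqrt4pi
    have h4 : (0:ℝ) ≤ ∫ x in (-r)..r, Real.exp (-(1/4) * x ^ 2) :=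
      intervalIntegral.integral_nonneg (by linarith) fun x _ => (Real.exp_pos _).le
    calc |∫ x in (-r)..r, Real.exp (-t) * (Real.exp 2.5 * Real.exp (-(1/4) * x ^ 2))|
        = (Real.exp (-t) * Real.exp 2.5) * ∫ x in (-r)..r, Real.exp (-(1/4) * x ^ 2) := by
          rw [abs_of_nonneg]
          · exact h2
          · exact intervalIntegral.integral_nonneg (by linarith)
              fun x _ => by positivity
      _ ≤ (Real.exp (-t) * Real.exp 2.5) * 3.545 := by
          apply mul_le_mul_of_nonneg_left h3 (by positivity)
      _ ≤ 50 * Real.exp (-t) := by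
          have h5 : Real.exp 2.5 * 3.545 ≤ 50 := by nlinarith [n_exp25, Real.exp_pos 2.5]
          nlinarith [Real.exp_pos (-t), Real.exp_pos 2.5]
  -- the bottom is the target integral
  have hbot : (∫ x in (-r)..r, F (↑x + ↑(0:ℝ) * Complex.I))
      = ∫ s in (-r)..r,
          Complex.exp (Complex.I * t * s) * (((1 - s ^ 2 / ν) ^ (ν - 1/2) : ℝ) : ℂ) := by
    apply intervalIntegral.integral_congr
    intro s hs
    rw [Set.uIcc_of_le (by linarith : -r ≤ r)] at hs
    have hs2 : s ^ 2 ≤ ν := by nlinarith [hs.1, hs.2]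
    have hb0 : (0:ℝ) ≤ 1 - s ^ 2 / ν := by
      rw [sub_nonneg, div_le_one hν0]; exact hs2
    simp only [Complex.ofReal_zero, zero_mul, add_zero]
    rw [hFz, hw]
    congr 1
    rw [show (1 : ℂ) - (s:ℂ) ^ 2 / (ν:ℂ) = (((1 - s ^ 2 / ν : ℝ)) : ℂ) by push_cast; ring,
      show ((ν:ℂ) - 1/2) = (((ν - 1/2 : ℝ)) : ℂ) by push_cast; ring,
      ← Complex.ofReal_cpow hb0]
  -- assemble
  have hsplit : (∫ x in (-r)..r, F (↑x + ↑(0:ℝ) * Complex.I))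
      = (∫ x in (-r)..r, F (↑x + ↑(1:ℝ) * Complex.I))
        - Complex.I • (∫ y in (0:ℝ)..1, F (↑r + ↑y * Complex.I))
        + Complex.I • (∫ y in (0:ℝ)..1, F (↑(-r) + ↑y * Complex.I)) := by
    linear_combination key
  have hR := hside r hrr
  have hL := hside (-r) (by rw [neg_pow]; simpa using hrr)
  rw [← hbot, hsplit]
  have hnI : ∀ X : ℂ, ‖Complex.I • X‖ = ‖X‖ := fun X => by
    rw [norm_smul, Complex.norm_I, one_mul]
  calc ‖(∫ x in (-r)..r, F (↑x + ↑(1:ℝ) * Complex.I))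
        - Complex.I • (∫ y in (0:ℝ)..1, F (↑r + ↑y * Complex.I))
        + Complex.I • (∫ y in (0:ℝ)..1, F (↑(-r) + ↑y * Complex.I))‖
      ≤ ‖(∫ x in (-r)..r, F (↑x + ↑(1:ℝ) * Complex.I))
          - Complex.I • (∫ y in (0:ℝ)..1, F (↑r + ↑y * Complex.I))‖
        + ‖Complex.I • (∫ y in (0:ℝ)..1, F (↑(-r) + ↑y * Complex.I))‖ := norm_add_le _ _
    _ ≤ ‖∫ x in (-r)..r, F (↑x + ↑(1:ℝ) * Complex.I)‖
        + ‖Complex.I • (∫ y in (0:ℝ)..1, F (↑r + ↑y * Complex.I))‖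
        + ‖Complex.I • (∫ y in (0:ℝ)..1, F (↑(-r) + ↑y * Complex.I))‖ := by
          have := norm_sub_le (∫ x in (-r)..r, F (↑x + ↑(1:ℝ) * Complex.I))
            (Complex.I • (∫ y in (0:ℝ)..1, F (↑r + ↑y * Complex.I)))
          linarith
    _ ≤ 50 * Real.exp (-t) + Real.exp (-ν / 5) + Real.exp (-ν / 5) := by
          rw [hnI, hnI]
          exact add_le_add (add_le_add htop hR) hL
    _ ≤ 50 * Real.exp (-t) + 2 * Real.exp (-ν / 5) := by linarith


lemma easy_norm (ν t s : ℝ) :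
    ‖Complex.exp (Complex.I * t * s) * (((1 - s ^ 2 / ν) ^ (ν - 1/2) : ℝ) : ℂ)‖
      = |(1 - s ^ 2 / ν) ^ (ν - 1/2)| := by
  rw [norm_mul, Complex.norm_exp, Complex.norm_real, Real.norm_eq_abs]
  have h : (Complex.I * (t:ℂ) * (s:ℂ)).re = 0 := by simp
  rw [h, Real.exp_zero, one_mul]

lemma easy_case_big (ν t : ℝ) (hν : 1 ≤ ν) :
    ‖∫ s in (-Real.sqrt ν)..(Real.sqrt ν),
        Complex.exp (Complex.I * t * s) * (((1 - s ^ 2 / ν) ^ (ν - 1/2) : ℝ) : ℂ)‖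
      ≤ 2.6 := by
  have hν0 : (0:ℝ) < ν := by linarith
  set r := Real.sqrt ν with hr
  have hr0 : 0 < r := Real.sqrt_pos.2 hν0
  have hrr : r ^ 2 = ν := Real.sq_sqrt hν0.le
  have hb : ∀ s ∈ Set.uIoc (-r) r,
      ‖Complex.exp (Complex.I * t * s) * (((1 - s ^ 2 / ν) ^ (ν - 1/2) : ℝ) : ℂ)‖
        ≤ Real.exp (-(1/2) * s ^ 2) := by
    intro s hs
    rw [Set.uIoc_of_le (by linarith)] at hs
    have hs2 : s ^ 2 ≤ ν := by nlinarith [hs.1, hs.2]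
    have hb0 : (0:ℝ) ≤ 1 - s ^ 2 / ν := by
      rw [sub_nonneg, div_le_one hν0]; exact hs2
    rw [easy_norm, abs_of_nonneg (Real.rpow_nonneg hb0 _)]
    have h1 : (1 - s ^ 2 / ν) ≤ Real.exp (-(s ^ 2 / ν)) := by
      have := Real.add_one_le_exp (-(s ^ 2 / ν)); linarith
    calc (1 - s ^ 2 / ν) ^ (ν - 1/2)
        ≤ Real.exp (-(s ^ 2 / ν)) ^ (ν - 1/2) :=
          Real.rpow_le_rpow hb0 h1 (by linarith)
      _ = Real.exp (-(s ^ 2 / ν) * (ν - 1/2)) := (Real.exp_mul _ _).symm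
      _ ≤ Real.exp (-(1/2) * s ^ 2) := by
          apply Real.exp_le_exp.2
          have h7 : s ^ 2 / ν * (ν - 1/2) - 1/2 * s ^ 2 = s ^ 2 * (ν - 1) / (2 * ν) := by
            field_simp; ring
          have h8 : 0 ≤ s ^ 2 * (ν - 1) / (2 * ν) :=
            div_nonneg (mul_nonneg (sq_nonneg s) (by linarith)) (by linarith)
          nlinarith [h7, h8]
  have hint : IntervalIntegrable (fun s : ℝ => Real.exp (-(1/2) * s ^ 2)) volume (-r) r :=
    (Continuous.intervalIntegrable (by fun_prop) _ _)
  have h1 := intervalIntegral.norm_integral_le_abs_of_norm_le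
    ((ae_restrict_mem measurableSet_uIoc).mono hb) hint
  refine h1.trans ?_
  have hInt : Integrable (fun x : ℝ => Real.exp (-(1/2) * x ^ 2)) :=
    integrable_exp_neg_mul_sq (by norm_num : (0:ℝ) < 1/2)
  have h3 : (∫ x in (-r)..r, Real.exp (-(1/2) * x ^ 2)) ≤ 2.6 := by
    rw [intervalIntegral.integral_of_le (by linarith : -r ≤ r)]
    calc (∫ x in Set.Ioc (-r) r, Real.exp (-(1/2) * x ^ 2))
        ≤ ∫ x : ℝ, Real.exp (-(1/2) * x ^ 2) :=
          setIntegral_le_integral hInt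
            (Filter.Eventually.of_forall fun x => (Real.exp_pos _).le)
      _ = Real.sqrt (π / (1/2)) := integral_gaussian (1/2)
      _ = Real.sqrt (2 * π) := by norm_num [div_eq_mul_inv, mul_comm]
      _ ≤ 2.6 := n_sqrt2pi
  have h4 : (0:ℝ) ≤ ∫ x in (-r)..r, Real.exp (-(1/2) * x ^ 2) :=
    intervalIntegral.integral_nonneg (by linarith) fun x _ => (Real.exp_pos _).le
  rw [abs_of_nonneg h4]
  exact h3

lemma easy_case_mid (ν t : ℝ) (hν0 : 1/2 ≤ ν) (hν : ν ≤ 1) :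
    ‖∫ s in (-Real.sqrt ν)..(Real.sqrt ν),
        Complex.exp (Complex.I * t * s) * (((1 - s ^ 2 / ν) ^ (ν - 1/2) : ℝ) : ℂ)‖
      ≤ 2 := by
  have hνpos : (0:ℝ) < ν := by linarith
  set r := Real.sqrt ν with hr
  have hr0 : 0 < r := Real.sqrt_pos.2 hνpos
  have hr1 : r ≤ 1 := by
    rw [hr, show (1:ℝ) = Real.sqrt 1 by rw [Real.sqrt_one]]
    exact Real.sqrt_le_sqrt hν
  have hrr : r ^ 2 = ν := Real.sq_sqrt hνpos.le
  have hb : ∀ s ∈ Set.uIoc (-r) r,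
      ‖Complex.exp (Complex.I * t * s) * (((1 - s ^ 2 / ν) ^ (ν - 1/2) : ℝ) : ℂ)‖ ≤ 1 := by
    intro s hs
    rw [Set.uIoc_of_le (by linarith)] at hs
    have hs2 : s ^ 2 ≤ ν := by nlinarith [hs.1, hs.2]
    have hb0 : (0:ℝ) ≤ 1 - s ^ 2 / ν := by
      rw [sub_nonneg, div_le_one hνpos]; exact hs2
    rw [easy_norm, abs_of_nonneg (Real.rpow_nonneg hb0 _)]
    apply Real.rpow_le_one hb0 _ (by linarith)
    nlinarith [div_nonneg (sq_nonneg s) hνpos.le]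
  calc ‖∫ s in (-r)..r,
        Complex.exp (Complex.I * t * s) * (((1 - s ^ 2 / ν) ^ (ν - 1/2) : ℝ) : ℂ)‖
      ≤ 1 * |r - (-r)| := intervalIntegral.norm_integral_le_of_norm_le_const fun s hs => hb s hs
    _ = |2 * r| := by ring_nf
    _ ≤ 2 := by rw [abs_of_nonneg (by linarith)]; linarith

lemma easy_case_small (ν t : ℝ) (hν0 : 0 < ν) (hν : ν < 1/2) :
    ‖∫ s in (-Real.sqrt ν)..(Real.sqrt ν),
        Complex.exp (Complex.I * t * s) * (((1 - s ^ 2 / ν) ^ (ν - 1/2) : ℝ) : ℂ)‖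
      ≤ 4 := by
  set r := Real.sqrt ν with hr
  have hr0 : 0 < r := Real.sqrt_pos.2 hν0
  have hrr : r ^ 2 = ν := Real.sq_sqrt hν0.le
  set c := Real.sqrt r with hc
  have hc0 : 0 ≤ c := Real.sqrt_nonneg r
  set g : ℝ → ℝ := fun s => c * ((r - s) ^ (-(1/2) : ℝ) + (r + s) ^ (-(1/2) : ℝ)) with hg
  have hbnd : ∀ s ∈ Set.uIoc (-r) r,
      ‖Complex.exp (Complex.I * t * s) * (((1 - s ^ 2 / ν) ^ (ν - 1/2) : ℝ) : ℂ)‖ ≤ g s := by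
    intro s hs
    rw [Set.uIoc_of_le (by linarith)] at hs
    have hsl : -r < s := hs.1
    have hsu : s ≤ r := hs.2
    have hg0 : 0 ≤ g s := by
      apply mul_nonneg hc0
      exact add_nonneg (Real.rpow_nonneg (by linarith) _) (Real.rpow_nonneg (by linarith) _)
    rw [easy_norm]
    rcases eq_or_lt_of_le hsu with heq | hlt
    · have : 1 - s ^ 2 / ν = 0 := by
        rw [heq, hrr, div_self hν0.ne', sub_self]
      rw [this, Real.zero_rpow (by linarith : ν - 1/2 ≠ 0), abs_zero]
      exact hg0
    · have hs2 : s ^ 2 < ν := by nlinarith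
      have hb0 : (0:ℝ) < 1 - s ^ 2 / ν := by
        rw [sub_pos, div_lt_one hν0]; exact hs2
      rw [abs_of_nonneg (Real.rpow_nonneg hb0.le _)]
      have h1 : (1 - s ^ 2 / ν) ^ (ν - 1/2) ≤ (1 - s ^ 2 / ν) ^ (-(1/2) : ℝ) :=
        Real.rpow_le_rpow_of_exponent_ge hb0 (by nlinarith [div_nonneg (sq_nonneg s) hν0.le])
          (by linarith)
    -- now bound (1 - s^2/ν)^(-1/2) by g s, splitting on the sign of s
      refine h1.trans ?_
      have hfact : 1 - s ^ 2 / ν = (r - s) * (r + s) / ν := by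
        rw [← hrr]; field_simp; ring
      rcases le_or_gt 0 s with hspos | hsneg
      · have hA0 : 0 < (r - s) / r := div_pos (by linarith) hr0
        have hAB : (r - s) / r ≤ 1 - s ^ 2 / ν := by
          rw [hfact, ← hrr]
          rw [div_le_div_iff₀ hr0 (by positivity)]
          nlinarith [mul_nonneg (mul_nonneg (sub_nonneg.2 hsu) hspos) hr0.le]
        have h2 : (1 - s ^ 2 / ν) ^ (-(1/2) : ℝ) ≤ ((r - s) / r) ^ (-(1/2) : ℝ) :=
          Real.rpow_le_rpow_of_nonpos hA0 hAB (by norm_num)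
        have h3 : ((r - s) / r) ^ (-(1/2) : ℝ) = c * (r - s) ^ (-(1/2) : ℝ) := by
          rw [Real.div_rpow (by linarith) hr0.le, Real.rpow_neg hr0.le,
            div_eq_mul_inv, inv_inv, mul_comm, hc, Real.sqrt_eq_rpow]
        refine h2.trans ?_
        rw [h3, hg]
        have : 0 ≤ c * (r + s) ^ (-(1/2) : ℝ) :=
          mul_nonneg hc0 (Real.rpow_nonneg (by linarith) _)
        nlinarith [mul_nonneg hc0 (Real.rpow_nonneg (show (0:ℝ) ≤ r - s by linarith) (-(1/2) : ℝ))]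
      · have hA0 : 0 < (r + s) / r := div_pos (by linarith) hr0
        have hAB : (r + s) / r ≤ 1 - s ^ 2 / ν := by
          rw [hfact, ← hrr]
          rw [div_le_div_iff₀ hr0 (by positivity)]
          nlinarith [mul_nonneg (mul_nonneg (by linarith : (0:ℝ) ≤ -s)
            (by linarith : (0:ℝ) ≤ r + s)) hr0.le]
        have h2 : (1 - s ^ 2 / ν) ^ (-(1/2) : ℝ) ≤ ((r + s) / r) ^ (-(1/2) : ℝ) :=
          Real.rpow_le_rpow_of_nonpos hA0 hAB (by norm_num)
        have h3 : ((r + s) / r) ^ (-(1/2) : ℝ) = c * (r + s) ^ (-(1/2) : ℝ) := by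
          rw [Real.div_rpow (by linarith) hr0.le, Real.rpow_neg hr0.le,
            div_eq_mul_inv, inv_inv, mul_comm, hc, Real.sqrt_eq_rpow]
        refine h2.trans ?_
        rw [h3, hg]
        nlinarith [mul_nonneg hc0 (Real.rpow_nonneg (show (0:ℝ) ≤ r - s by linarith) (-(1/2) : ℝ))]
  have i1 : IntervalIntegrable (fun s : ℝ => (r - s) ^ (-(1/2) : ℝ)) volume (-r) r := by
    have h0 : IntervalIntegrable (fun x : ℝ => x ^ (-(1/2) : ℝ)) volume 0 (2 * r) :=
      intervalIntegral.intervalIntegrable_rpow' (by norm_num)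
    have := h0.comp_sub_left r
    have h2 : r - 2 * r = -r := by ring
    rw [h2, sub_zero] at this
    exact this.symm
  have i2 : IntervalIntegrable (fun s : ℝ => (r + s) ^ (-(1/2) : ℝ)) volume (-r) r := by
    have h0 : IntervalIntegrable (fun x : ℝ => x ^ (-(1/2) : ℝ)) volume 0 (2 * r) :=
      intervalIntegral.intervalIntegrable_rpow' (by norm_num)
    have := h0.comp_add_left r
    have h2 : 2 * r - r = r := by ring
    rw [h2, zero_sub] at this
    exact this
  have hint_g : IntervalIntegrable g volume (-r) r := by
    rw [hg]
    exact (i1.add i2).const_mul c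
  have h1 := intervalIntegral.norm_integral_le_abs_of_norm_le
    ((ae_restrict_mem measurableSet_uIoc).mono hbnd) hint_g
  refine h1.trans ?_
  have hval : (∫ x in (0:ℝ)..(2*r), x ^ (-(1/2) : ℝ)) = 2 * (2*r) ^ ((1/2) : ℝ) := by
    rw [integral_rpow (Or.inl (by norm_num : (-1:ℝ) < -(1/2)))]
    rw [show (-(1/2) : ℝ) + 1 = 1/2 by norm_num, Real.zero_rpow (by norm_num : (1/2 : ℝ) ≠ 0)]
    ring
  have hI1 : (∫ s in (-r)..r, (r - s) ^ (-(1/2) : ℝ)) = 2 * (2*r) ^ ((1/2) : ℝ) := by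
    rw [intervalIntegral.integral_comp_sub_left (fun x : ℝ => x ^ (-(1/2) : ℝ)) r]
    rw [show r - r = 0 by ring, show r - -r = 2 * r by ring]
    exact hval
  have hI2 : (∫ s in (-r)..r, (r + s) ^ (-(1/2) : ℝ)) = 2 * (2*r) ^ ((1/2) : ℝ) := by
    rw [intervalIntegral.integral_comp_add_left (fun x : ℝ => x ^ (-(1/2) : ℝ)) r]
    rw [show r + -r = 0 by ring, show r + r = 2 * r by ring]
    exact hval
  have hgi : (∫ s in (-r)..r, g s) = c * (4 * (2*r) ^ ((1/2) : ℝ)) := by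
    rw [hg]
    rw [intervalIntegral.integral_const_mul]
    rw [intervalIntegral.integral_add i1 i2, hI1, hI2]
    ring
  have hcr : c * (2*r) ^ ((1/2) : ℝ) ≤ 1 := by
    rw [hc, ← Real.sqrt_eq_rpow, ← Real.sqrt_mul hr0.le]
    rw [show r * (2 * r) = 2 * r ^ 2 by ring, hrr]
    rw [show (1:ℝ) = Real.sqrt 1 by rw [Real.sqrt_one]]
    exact Real.sqrt_le_sqrt (by linarith)
  rw [hgi, abs_of_nonneg (by positivity)]
  nlinarith [Real.rpow_nonneg (show (0:ℝ) ≤ 2*r by linarith) ((1/2) : ℝ)]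

end BesselAux

/-- For every `ν > 0` and `t ≥ 0`,
`|∫_{−√ν}^{√ν} e^{its} (1 − s²/ν)^{ν−1/2} ds| ≤ 2100 (e^{−t} + e^{−ν/5})`. -/
theorem bessel_integral_bound (ν t : ℝ) (hν : 0 < ν) (ht : 0 ≤ t) :
    ‖∫ s in (-Real.sqrt ν)..(Real.sqrt ν),
        Complex.exp (Complex.I * t * s) * (((1 - s ^ 2 / ν) ^ (ν - 1/2) : ℝ) : ℂ)‖
      ≤ 2100 * (Real.exp (-t) + Real.exp (-ν / 5)) := by
  by_cases hhard : 33 ≤ ν ∧ 6.5 ≤ t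
  · have h := BesselAux.hard_case ν t hhard.1 ht
    have e1 := Real.exp_pos (-t)
    have e2 := Real.exp_pos (-ν / 5)
    linarith
  · push_neg at hhard
    rcases lt_or_ge ν (1/2) with hsm | hge
    · have h := BesselAux.easy_case_small ν t hν hsm
      have e2 : Real.exp (-(1/10) : ℝ) ≤ Real.exp (-ν / 5) :=
        Real.exp_le_exp.2 (by linarith)
      have e3 : (9/10 : ℝ) ≤ Real.exp (-(1/10) : ℝ) := by
        have := Real.add_one_le_exp (-(1/10) : ℝ); linarith
      have e1 := Real.exp_pos (-t)
      linarith
    · rcases le_or_gt ν 1 with hmid | hbig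
      · have h := BesselAux.easy_case_mid ν t hge hmid
        have e2 : Real.exp (-(1/5) : ℝ) ≤ Real.exp (-ν / 5) :=
          Real.exp_le_exp.2 (by linarith)
        have e3 : (4/5 : ℝ) ≤ Real.exp (-(1/5) : ℝ) := by
          have := Real.add_one_le_exp (-(1/5) : ℝ); linarith
        have e1 := Real.exp_pos (-t)
        linarith
      · have h := BesselAux.easy_case_big ν t hbig.le
        rcases lt_or_ge ν 33 with hν33 | hν33
        · have e3 : (1/784 : ℝ) ≤ Real.exp (-(6.6 : ℝ)) := by
            rw [Real.exp_neg, ← one_div]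
            exact one_div_le_one_div_of_le (Real.exp_pos _) BesselAux.n_exp66
          have e2 : Real.exp (-(6.6 : ℝ)) ≤ Real.exp (-ν / 5) :=
            Real.exp_le_exp.2 (by norm_num; linarith)
          have e1 := Real.exp_pos (-t)
          linarith
        · have ht65 : t < 6.5 := hhard hν33
          have e3 : (1/732 : ℝ) ≤ Real.exp (-(6.5 : ℝ)) := by
            rw [Real.exp_neg, ← one_div]
            exact one_div_le_one_div_of_le (Real.exp_pos _) BesselAux.n_exp65
          have e2 : Real.exp (-(6.5 : ℝ)) ≤ Real.exp (-t) :=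
            Real.exp_le_exp.2 (by linarith)
          have e1 := Real.exp_pos (-ν / 5)
          linarith
end
end

section
/- Let d ≥ 4. The function m is differentiable on (0,∞) and for all x > 0 one has |x · m′(x)| ≤ 10^4. -/
noncomputable section
open MeasureTheory Real Filter Metric
open scoped ENNReal NNReal FourierTransform SchwartzMap

/-- The Bessel function of the first kind
`J_ν(t) = (t^ν/(2^ν Γ(ν+1/2) √π)) ∫_{−1}^{1} e^{its} (1−s²)^{ν−1/2} ds`. -/
def besselJ (ν : ℝ) (t : ℝ) : ℂ :=
  ((t ^ ν / (2 ^ ν * Real.Gamma (ν + 1/2) * Real.sqrt π) : ℝ) : ℂ) *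
    ∫ s in (-1 : ℝ)..1, Complex.exp (Complex.I * t * s) * (((1 - s ^ 2) ^ (ν - 1/2) : ℝ) : ℂ)

/-- The multiplier function
`m(x) = (2^{d/2} Γ((d+1)/2)/√π) ∫_{2πx}^{∞} r^{−d/2} J_{d/2}(r) dr`. -/
def mMul (d : ℕ) (x : ℝ) : ℂ :=
  ((2 ^ ((d : ℝ) / 2) * Real.Gamma (((d : ℝ) + 1) / 2) / Real.sqrt π : ℝ) : ℂ) *
    ∫ r in Set.Ioi (2 * π * x), ((r ^ (-(d : ℝ) / 2) : ℝ) : ℂ) * besselJ ((d : ℝ) / 2) r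

open Topology

def gfun (ν : ℝ) (s : ℝ) : ℝ := (1 - s^2) ^ (ν - 1/2)
def gfun' (ν : ℝ) (s : ℝ) : ℝ := (ν - 1/2) * (1 - s^2) ^ (ν - 1/2 - 1) * (-2*s)

lemma gfun_cont {ν : ℝ} (hν : 2 ≤ ν) : Continuous (gfun ν) := by
  rw [continuous_iff_continuousAt]
  intro s
  exact (Real.continuousAt_rpow_const _ _ (Or.inr (by linarith))).comp
    (by fun_prop : ContinuousAt (fun s : ℝ => 1 - s^2) s)

lemma gfun'_cont {ν : ℝ} (hν : 2 ≤ ν) : Continuous (gfun' ν) := by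
  apply Continuous.mul ?_ (by fun_prop)
  apply Continuous.mul continuous_const
  rw [continuous_iff_continuousAt]
  intro s
  exact (Real.continuousAt_rpow_const _ _ (Or.inr (by linarith))).comp
    (by fun_prop : ContinuousAt (fun s : ℝ => 1 - s^2) s)

lemma gfun_hasDeriv {ν : ℝ} {s : ℝ} (hs : s ∈ Set.Ioo (-1:ℝ) 1) :
    HasDerivAt (gfun ν) (gfun' ν s) s := by
  have h1 : (0:ℝ) < 1 - s^2 := by nlinarith [hs.1, hs.2]
  have h := (HasDerivAt.rpow_const (p := ν - 1/2)
    (((hasDerivAt_pow 2 s).const_sub 1)) (Or.inl h1.ne'))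
  unfold gfun gfun'
  convert h using 1 <;> ring

lemma gfun_one {ν : ℝ} (hν : 2 ≤ ν) : gfun ν 1 = 0 := by
  simp [gfun]
  exact Real.zero_rpow (by norm_num; linarith)

lemma gfun_neg_one {ν : ℝ} (hν : 2 ≤ ν) : gfun ν (-1) = 0 := by
  simp [gfun]
  exact Real.zero_rpow (by norm_num; linarith)

lemma gfun_zero : gfun ν 0 = 1 := by simp [gfun]

lemma abs_int {ν : ℝ} (hν : 2 ≤ ν) : ∫ s in (-1:ℝ)..1, |gfun' ν s| = 2 := by
  have hderiv : ∀ s ∈ Set.Ioo (-1:ℝ) 1, HasDerivAt (gfun ν) (gfun' ν s) s :=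
    fun s hs => gfun_hasDeriv hs
  have hint : ∀ a b : ℝ, IntervalIntegrable (gfun' ν) volume a b :=
    fun a b => (gfun'_cont hν).intervalIntegrable a b
  have h1 : ∫ s in (0:ℝ)..1, gfun' ν s = gfun ν 1 - gfun ν 0 := by
    apply intervalIntegral.integral_eq_sub_of_hasDeriv_right_of_le (by norm_num)
      ((gfun_cont hν).continuousOn)
      (fun s hs => (hderiv s ⟨by linarith [hs.1], hs.2⟩).hasDerivWithinAt) (hint 0 1)
  have h2 : ∫ s in (-1:ℝ)..0, gfun' ν s = gfun ν 0 - gfun ν (-1) := by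
    apply intervalIntegral.integral_eq_sub_of_hasDeriv_right_of_le (by norm_num)
      ((gfun_cont hν).continuousOn)
      (fun s hs => (hderiv s ⟨hs.1, by linarith [hs.2]⟩).hasDerivWithinAt) (hint (-1) 0)
  have e1 : ∫ s in (0:ℝ)..1, |gfun' ν s| = ∫ s in (0:ℝ)..1, -gfun' ν s := by
    apply intervalIntegral.integral_congr
    intro s hs
    rw [Set.uIcc_of_le (by norm_num : (0:ℝ) ≤ 1)] at hs
    have h0 : (0:ℝ) ≤ 1 - s^2 := by nlinarith [hs.1, hs.2]
    have : gfun' ν s ≤ 0 := by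
      unfold gfun'
      exact mul_nonpos_of_nonneg_of_nonpos
        (mul_nonneg (by linarith) (Real.rpow_nonneg h0 _)) (by linarith [hs.1])
    simp [abs_of_nonpos this]
  have e2 : ∫ s in (-1:ℝ)..0, |gfun' ν s| = ∫ s in (-1:ℝ)..0, gfun' ν s := by
    apply intervalIntegral.integral_congr
    intro s hs
    rw [Set.uIcc_of_le (by norm_num : (-1:ℝ) ≤ 0)] at hs
    have h0 : (0:ℝ) ≤ 1 - s^2 := by nlinarith [hs.1, hs.2]
    have : 0 ≤ gfun' ν s := by
      unfold gfun'
      exact mul_nonneg (mul_nonneg (by linarith) (Real.rpow_nonneg h0 _)) (by linarith [hs.2])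
    simp [abs_of_nonneg this]
  have := intervalIntegral.integral_add_adjacent_intervals
    ((gfun'_cont hν).abs.intervalIntegrable (μ := volume) (-1) 0)
    ((gfun'_cont hν).abs.intervalIntegrable (μ := volume) 0 1)
  rw [e1, e2, intervalIntegral.integral_neg, h1, h2,
    gfun_one hν, gfun_neg_one hν, gfun_zero] at this
  linarith [this]

lemma osc_bound {ν t : ℝ} (hν : 2 ≤ ν) (ht : 0 < t) :
    ‖∫ s in (-1:ℝ)..1, Complex.exp (Complex.I * t * s) * ((gfun ν s : ℝ) : ℂ)‖ ≤ 2 / t := by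
  set c : ℂ := Complex.I * t with hc
  have hc0 : c ≠ 0 := by
    simp [hc, Complex.ext_iff, Complex.I_mul_re, Complex.I_mul_im]
    intro h; exact absurd h ht.ne'
  have hE : ∀ s : ℝ, HasDerivAt (fun s : ℝ => Complex.exp (c * s)) (Complex.exp (c * s) * c) s := by
    intro s
    have h0 : HasDerivAt (fun s : ℝ => c * (s : ℂ)) c s := by
      simpa using (Complex.ofRealCLM.hasDerivAt (x := s)).const_mul c
    exact h0.cexp
  have hgC : Continuous fun s : ℝ => ((gfun ν s : ℝ) : ℂ) :=
    Complex.continuous_ofReal.comp (gfun_cont hν)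
  have hg'C : Continuous fun s : ℝ => ((gfun' ν s : ℝ) : ℂ) :=
    Complex.continuous_ofReal.comp (gfun'_cont hν)
  have hEC : Continuous fun s : ℝ => Complex.exp (c * s) :=
    Complex.continuous_exp.comp (by fun_prop)
  have hF : ∀ s ∈ Set.Ioo (-1:ℝ) 1,
      HasDerivAt (fun s : ℝ => c⁻¹ * (Complex.exp (c * s) * (gfun ν s : ℂ)))
        (Complex.exp (c * s) * (gfun ν s : ℂ) + c⁻¹ * (Complex.exp (c * s) * (gfun' ν s : ℂ))) s := by
    intro s hs
    have h1 := ((hE s).mul ((gfun_hasDeriv (ν := ν) hs).ofReal_comp)).const_mul c⁻¹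
    convert h1 using 1
    · rfl
    · rfl
    linear_combination (-(Complex.exp (c * s) * (gfun ν s : ℂ))) * (inv_mul_cancel₀ hc0)
  have hFTC : (∫ s in (-1:ℝ)..1,
      (Complex.exp (c * s) * (gfun ν s : ℂ) + c⁻¹ * (Complex.exp (c * s) * (gfun' ν s : ℂ)))) = 0 := by
    rw [intervalIntegral.integral_eq_sub_of_hasDeriv_right_of_le (by norm_num)
      (Continuous.continuousOn (by fun_prop))
      (fun s hs => (hF s hs).hasDerivWithinAt)
      (Continuous.intervalIntegrable (by fun_prop) _ _)]
    simp [gfun_one hν, gfun_neg_one hν]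
  rw [intervalIntegral.integral_add (Continuous.intervalIntegrable (by fun_prop) _ _)
    (Continuous.intervalIntegrable (by fun_prop) _ _)] at hFTC
  have key : (∫ s in (-1:ℝ)..1, Complex.exp (c * s) * (gfun ν s : ℂ))
      = -(c⁻¹ * ∫ s in (-1:ℝ)..1, Complex.exp (c * s) * (gfun' ν s : ℂ)) := by
    rw [← intervalIntegral.integral_const_mul]
    linear_combination hFTC
  have hb : ‖∫ s in (-1:ℝ)..1, Complex.exp (c * s) * (gfun' ν s : ℂ)‖ ≤ 2 := by
    calc ‖∫ s in (-1:ℝ)..1, Complex.exp (c * s) * (gfun' ν s : ℂ)‖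
        ≤ ∫ s in (-1:ℝ)..1, ‖Complex.exp (c * s) * (gfun' ν s : ℂ)‖ :=
          intervalIntegral.norm_integral_le_integral_norm (by norm_num)
      _ = ∫ s in (-1:ℝ)..1, |gfun' ν s| := by
          apply intervalIntegral.integral_congr
          intro s _
          simp [hc, Complex.norm_exp]
      _ = 2 := abs_int hν
  calc ‖∫ s in (-1:ℝ)..1, Complex.exp (c * s) * ((gfun ν s : ℝ) : ℂ)‖
      = ‖c‖⁻¹ * ‖∫ s in (-1:ℝ)..1, Complex.exp (c * s) * (gfun' ν s : ℂ)‖ := by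
        rw [key]; simp
    _ ≤ ‖c‖⁻¹ * 2 := by
        apply mul_le_mul_of_nonneg_left hb (by positivity)
    _ = 2 / t := by
        simp [hc, Complex.norm_def]
        rw [abs_of_pos ht]
        ring

lemma besselJ_norm_bound {ν t : ℝ} (hν : 2 ≤ ν) (ht : 0 < t) :
    ‖besselJ ν t‖ ≤ 2 * t ^ (ν - 1) / (2 ^ ν * Real.Gamma (ν + 1/2) * Real.sqrt π) := by
  have hD : 0 < 2 ^ ν * Real.Gamma (ν + 1/2) * Real.sqrt π := by
    have h1 : 0 < Real.Gamma (ν + 1/2) := Real.Gamma_pos_of_pos (by linarith)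
    have h2 : 0 < Real.sqrt π := Real.sqrt_pos.mpr Real.pi_pos
    positivity
  have hi := osc_bound (ν := ν) (t := t) hν ht
  unfold besselJ
  rw [norm_mul, Complex.norm_real, Real.norm_eq_abs]
  have hcf : |t ^ ν / (2 ^ ν * Real.Gamma (ν + 1/2) * Real.sqrt π)|
      = t ^ ν / (2 ^ ν * Real.Gamma (ν + 1/2) * Real.sqrt π) := by
    rw [abs_of_nonneg]
    positivity
  rw [hcf]
  calc t ^ ν / (2 ^ ν * Real.Gamma (ν + 1/2) * Real.sqrt π) *
        ‖∫ s in (-1:ℝ)..1, Complex.exp (Complex.I * t * s) * (((1 - s ^ 2) ^ (ν - 1/2) : ℝ) : ℂ)‖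
      ≤ t ^ ν / (2 ^ ν * Real.Gamma (ν + 1/2) * Real.sqrt π) * (2 / t) := by
        apply mul_le_mul_of_nonneg_left _ (by positivity)
        exact hi
    _ = 2 * t ^ (ν - 1) / (2 ^ ν * Real.Gamma (ν + 1/2) * Real.sqrt π) := by
        rw [Real.rpow_sub ht, Real.rpow_one]
        field_simp

lemma besselJ_integral_cont {ν : ℝ} (hν : 2 ≤ ν) :
    Continuous fun t : ℝ =>
      ∫ s in (-1:ℝ)..1, Complex.exp (Complex.I * t * s) * (((1 - s ^ 2) ^ (ν - 1/2) : ℝ) : ℂ) := by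
  apply intervalIntegral.continuous_parametric_intervalIntegral_of_continuous'
    (μ := volume) (f := fun (t : ℝ) (s : ℝ) => Complex.exp (Complex.I * t * s) * (((1 - s ^ 2) ^ (ν - 1/2) : ℝ) : ℂ))
  apply Continuous.mul
  · exact Complex.continuous_exp.comp (by fun_prop)
  · exact Complex.continuous_ofReal.comp ((gfun_cont hν).comp continuous_snd)

lemma besselJ_continuousOn {ν : ℝ} (hν : 2 ≤ ν) :
    ContinuousOn (besselJ ν) (Set.Ioi (0:ℝ)) := by
  intro t ht
  apply ContinuousAt.continuousWithinAt
  unfold besselJ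
  apply ContinuousAt.mul
  · apply Complex.continuous_ofReal.continuousAt.comp
    apply ContinuousAt.div_const
    exact (Real.continuousAt_rpow_const _ _ (Or.inl (ne_of_gt ht)))
  · exact (besselJ_integral_cont hν).continuousAt

/-- Let `d ≥ 4`. The function `m` is differentiable on `(0,∞)` and for all
`x > 0` one has `|x·m′(x)| ≤ 10^4`. -/
theorem mMul_deriv_bound (d : ℕ) (hd : 4 ≤ d) (x : ℝ) (hx : 0 < x) :
    DifferentiableAt ℝ (mMul d) x ∧ ‖(x : ℂ) * deriv (mMul d) x‖ ≤ 10 ^ 4 := by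
  have hd4 : (4:ℝ) ≤ (d:ℝ) := by exact_mod_cast hd
  have hπ := Real.pi_pos
  set ν : ℝ := (d:ℝ)/2 with hνdef
  have hν : 2 ≤ ν := by rw [hνdef]; linarith
  set f : ℝ → ℂ := fun r => ((r ^ (-(d : ℝ) / 2) : ℝ) : ℂ) * besselJ ν r with hfdef
  have hfc : ContinuousOn f (Set.Ioi (0:ℝ)) := by
    apply ContinuousOn.mul _ (besselJ_continuousOn hν)
    intro r hr
    apply ContinuousAt.continuousWithinAt
    exact Complex.continuous_ofReal.continuousAt.comp
      (Real.continuousAt_rpow_const _ _ (Or.inl (ne_of_gt hr)))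
  set Cc : ℂ := ((2 ^ ν * Real.Gamma (((d : ℝ) + 1) / 2) / Real.sqrt π : ℝ) : ℂ) with hCc
  have hmEq : mMul d = fun x' : ℝ => Cc * ∫ r in Set.Ioi (2 * π * x'), f r := rfl
  by_cases hInt : IntegrableOn f (Set.Ioi (π*x)) volume
  · -- integrable case
    have hΓ : 0 < Real.Gamma (ν + 1/2) := Real.Gamma_pos_of_pos (by linarith)
    have hsπ : 0 < Real.sqrt π := Real.sqrt_pos.mpr hπ
    have ht : 0 < 2*π*x := by positivity
    have ha : 0 < π*x := by positivity
    have hay : π*x < 2*π*x := by nlinarith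
    have hiiv : IntervalIntegrable f volume (π*x) (2*π*x) := by
      apply ContinuousOn.intervalIntegrable
      apply hfc.mono
      rw [Set.uIcc_of_le hay.le]
      intro r hr
      exact lt_of_lt_of_le ha hr.1
    have hmeas : StronglyMeasurableAtFilter f (𝓝 (2*π*x)) volume :=
      hfc.stronglyMeasurableAtFilter isOpen_Ioi _ ht
    have hcont : ContinuousAt f (2*π*x) := hfc.continuousAt (Ioi_mem_nhds ht)
    have hG := intervalIntegral.integral_hasDerivAt_right hiiv hmeas hcont
    have hJ : HasDerivAt
        (fun y => (∫ r in Set.Ioi (π*x), f r) - ∫ r in (π*x)..y, f r)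
        (-(f (2*π*x))) (2*π*x) := hG.const_sub _
    have hEv2 : (fun y => ∫ r in Set.Ioi y, f r) =ᶠ[𝓝 (2*π*x)]
        (fun y => (∫ r in Set.Ioi (π*x), f r) - ∫ r in (π*x)..y, f r) := by
      filter_upwards [Ioi_mem_nhds hay] with y hy
      have hy0 : π*x ≤ y := le_of_lt hy
      have h1 : IntegrableOn f (Set.Ioc (π*x) y) volume :=
        hInt.mono_set Set.Ioc_subset_Ioi_self
      have h2 : IntegrableOn f (Set.Ioi y) volume :=
        hInt.mono_set (Set.Ioi_subset_Ioi hy0)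
      rw [intervalIntegral.integral_of_le hy0, ← Set.Ioc_union_Ioi_eq_Ioi hy0,
        MeasureTheory.setIntegral_union (Set.Ioc_disjoint_Ioi le_rfl) measurableSet_Ioi h1 h2]
      ring
    have hI : HasDerivAt (fun y => ∫ r in Set.Ioi y, f r) (-(f (2*π*x))) (2*π*x) :=
      hJ.congr_of_eventuallyEq hEv2
    have hφ : HasDerivAt (fun x' : ℝ => 2*π*x') (2*π) x := by
      simpa using (hasDerivAt_id x).const_mul (2*π)
    have hcomp : HasDerivAt (fun x' : ℝ => ∫ r in Set.Ioi (2*π*x'), f r)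
        ((2*π) • (-(f (2*π*x)))) x := hI.scomp x hφ
    have hm : HasDerivAt (mMul d) (Cc * ((2*π) • (-(f (2*π*x))))) x := by
      rw [hmEq]; exact hcomp.const_mul Cc
    refine ⟨hm.differentiableAt, ?_⟩
    rw [hm.deriv]
    -- norms
    set D : ℝ := 2 ^ ν * Real.Gamma (ν + 1/2) * Real.sqrt π with hD
    have hDpos : 0 < D := by rw [hD]; positivity
    have hgam : ((d:ℝ)+1)/2 = ν + 1/2 := by rw [hνdef]; ring
    have hCnorm : ‖Cc‖ = 2 ^ ν * Real.Gamma (ν + 1/2) / Real.sqrt π := by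
      rw [hCc, Complex.norm_real, Real.norm_eq_abs, hgam, abs_of_nonneg (by positivity)]
    have hfb : ‖f (2*π*x)‖ ≤ (2*π*x) ^ (-(d:ℝ)/2) * (2*(2*π*x)^(ν-1)/D) := by
      rw [hfdef]
      simp only [norm_mul, Complex.norm_real, Real.norm_eq_abs]
      rw [abs_of_nonneg (Real.rpow_nonneg ht.le _)]
      exact mul_le_mul_of_nonneg_left (besselJ_norm_bound hν ht) (Real.rpow_nonneg ht.le _)
    have hnorm : ‖(x:ℂ) * (Cc * ((2*π) • (-(f (2*π*x)))))‖
        = x * (‖Cc‖ * ((2*π) * ‖f (2*π*x)‖)) := by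
      rw [norm_mul, norm_mul, norm_smul, norm_neg, Complex.norm_real, Real.norm_eq_abs,
        Real.norm_eq_abs, abs_of_pos hx, abs_of_pos (by positivity : (0:ℝ) < 2*π)]
    rw [hnorm, hCnorm]
    have key : x * ((2 ^ ν * Real.Gamma (ν + 1/2) / Real.sqrt π) *
        ((2*π) * ((2*π*x) ^ (-(d:ℝ)/2) * (2*(2*π*x)^(ν-1)/D)))) = 2/π := by
      have hexp : (2*π*x) ^ (-(d:ℝ)/2) * (2*π*x)^(ν-1) = (2*π*x)⁻¹ := by
        rw [← Real.rpow_add ht]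
        rw [show -(d:ℝ)/2 + (ν-1) = -1 by rw [hνdef]; ring, Real.rpow_neg_one]
      have hππ : Real.sqrt π * Real.sqrt π = π := Real.mul_self_sqrt hπ.le
      rw [hD]
      rw [show (2*π*x) ^ (-(d:ℝ)/2) * (2*(2*π*x)^(ν-1)/(2^ν * Real.Gamma (ν+1/2) * Real.sqrt π))
          = 2 * ((2*π*x) ^ (-(d:ℝ)/2) * (2*π*x)^(ν-1)) / (2^ν * Real.Gamma (ν+1/2) * Real.sqrt π)
          by ring, hexp]
      have h2ν : (0:ℝ) < 2 ^ ν := Real.rpow_pos_of_pos two_pos ν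
      generalize hGg : Real.Gamma (ν + 1/2) = G at hΓ ⊢
      field_simp
      linear_combination (-1:ℝ) * hππ
    calc x * ((2 ^ ν * Real.Gamma (ν + 1/2) / Real.sqrt π) * ((2*π) * ‖f (2*π*x)‖))
        ≤ x * ((2 ^ ν * Real.Gamma (ν + 1/2) / Real.sqrt π) *
            ((2*π) * ((2*π*x) ^ (-(d:ℝ)/2) * (2*(2*π*x)^(ν-1)/D)))) := by
          gcongr
      _ = 2/π := key
      _ ≤ 10 ^ 4 := by
          rw [div_le_iff₀ hπ]
          nlinarith [Real.pi_gt_three]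
  · -- non-integrable case
    have hzero : mMul d =ᶠ[𝓝 x] fun _ => Cc * 0 := by
      filter_upwards [Ioi_mem_nhds (half_lt_self hx)] with x' hx'
      have hx' : x/2 < x' := hx'
      have hle : π*x ≤ 2*π*x' := by nlinarith
      have hnotInt : ¬ IntegrableOn f (Set.Ioi (2*π*x')) volume := by
        intro hInt'
        apply hInt
        rw [← Set.Ioc_union_Ioi_eq_Ioi hle]
        apply MeasureTheory.IntegrableOn.union _ hInt'
        apply (hfc.mono _).integrableOn_Icc.mono_set Set.Ioc_subset_Icc_self
        intro r hr
        exact lt_of_lt_of_le (by positivity) hr.1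
      have hr : mMul d x' = Cc * ∫ r in Set.Ioi (2*π*x'), f r := rfl
      rw [hr, MeasureTheory.integral_undef hnotInt]
    constructor
    · exact (differentiableAt_const (Cc * 0)).congr_of_eventuallyEq hzero
    · rw [hzero.deriv_eq]
      simp
end
end
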